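/- Delayed dechirped chirp identity: for a delay k₁ with 0 ≤ k₁ < M and all k ∈ {0,…,M−1}, x_0*[k]·x_ā[k − k₁] = x_ā[M − k₁]·exp(2πi·k·(ā − k₁)/M), where x_ā is extended to negative arguments by the defining formula and M is even. -/
import Mathlib


/-- Delayed dechirped chirp identity:
`conj (x_0[k]) * x_ā[k − k₁] = x_ā[M − k₁] · exp(2πi·k·(ā − k₁)/M)` for even `M = 2^SF`. -/
theorem lora_delayed_dechirp (SF : ℕ) (hSF : 1 ≤ SF) (abar : ℤ) (k₁ : ℤ)
    (hk₁0 : 0 ≤ k₁) (hk₁1 : k₁ < (2 ^ SF : ℤ)) (k : ℤ) (hk0 : 0 ≤ k)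
    (hk1 : k ≤ (2 ^ SF : ℤ) - 1) :
    (starRingEnd ℂ) (Complex.exp (2 * (Real.pi : ℂ) * Complex.I * (k : ℂ) *
        (-(1 / 2) + (k : ℂ) / (2 * ((2 ^ SF : ℕ) : ℂ)))))
      * Complex.exp (2 * (Real.pi : ℂ) * Complex.I * ((k - k₁ : ℤ) : ℂ) *
        ((abar : ℂ) / ((2 ^ SF : ℕ) : ℂ) - 1 / 2 + ((k - k₁ : ℤ) : ℂ) / (2 * ((2 ^ SF : ℕ) : ℂ))))
    = Complex.exp (2 * (Real.pi : ℂ) * Complex.I * (((2 ^ SF : ℤ) - k₁ : ℤ) : ℂ) *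
        ((abar : ℂ) / ((2 ^ SF : ℕ) : ℂ) - 1 / 2 + (((2 ^ SF : ℤ) - k₁ : ℤ) : ℂ) / (2 * ((2 ^ SF : ℕ) : ℂ))))
      * Complex.exp (2 * (Real.pi : ℂ) * Complex.I * (k : ℂ) * ((abar - k₁ : ℤ) : ℂ) / ((2 ^ SF : ℕ) : ℂ)) := by
  have hM : ((2 ^ SF : ℕ) : ℂ) ≠ 0 := Nat.cast_ne_zero.mpr (by positivity)
  rw [← Complex.exp_conj, ← Complex.exp_add, ← Complex.exp_add]
  have hconj : (starRingEnd ℂ) (2 * (Real.pi : ℂ) * Complex.I * (k : ℂ) *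
        (-(1 / 2) + (k : ℂ) / (2 * ((2 ^ SF : ℕ) : ℂ))))
      = -(2 * (Real.pi : ℂ) * Complex.I * (k : ℂ) *
        (-(1 / 2) + (k : ℂ) / (2 * ((2 ^ SF : ℕ) : ℂ)))) := by
    simp [map_mul, map_add, map_div₀, map_ofNat, Complex.conj_I, Complex.conj_ofReal]
  rw [hconj]
  rw [show -(2 * (Real.pi : ℂ) * Complex.I * (k : ℂ) *
        (-(1 / 2) + (k : ℂ) / (2 * ((2 ^ SF : ℕ) : ℂ))))
      + 2 * (Real.pi : ℂ) * Complex.I * ((k - k₁ : ℤ) : ℂ) *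
        ((abar : ℂ) / ((2 ^ SF : ℕ) : ℂ) - 1 / 2 + ((k - k₁ : ℤ) : ℂ) / (2 * ((2 ^ SF : ℕ) : ℂ)))
      = (2 * (Real.pi : ℂ) * Complex.I * (((2 ^ SF : ℤ) - k₁ : ℤ) : ℂ) *
        ((abar : ℂ) / ((2 ^ SF : ℕ) : ℂ) - 1 / 2 + (((2 ^ SF : ℤ) - k₁ : ℤ) : ℂ) / (2 * ((2 ^ SF : ℕ) : ℂ)))
      + 2 * (Real.pi : ℂ) * Complex.I * (k : ℂ) * ((abar - k₁ : ℤ) : ℂ) / ((2 ^ SF : ℕ) : ℂ))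
      + ((k₁ - abar : ℤ) : ℂ) * (2 * Real.pi * Complex.I) from by
    push_cast
    field_simp
    ring]
  rw [Complex.exp_add, Complex.exp_int_mul_two_pi_mul_I, mul_one]
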